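/- arXiv:1401.3806 — 4 statements merged into one kernel-verified Lean document; each statement's English description precedes it below -/
import Mathlib

section
/- Let (Ω, F, P) be a probability space, let F_k ⊆ F be a sub-σ-algebra, and let X be a random variable with |X| ≤ C almost surely that is measurable with respect to another sub-σ-algebra G. Suppose the φ-mixing bound sup{|P(A|B) − P(A)| : A ∈ G, B ∈ F_k, P(B) > 0} ≤ φ holds. Then ‖E[X | F_k] − E[X]‖_∞ ≤ 2Cφ. -/
open MeasureTheory Filter Set

lemma tv_bound {α : Type*} [MeasurableSpace α] (p q : Measure α)
    [IsFiniteMeasure p] [IsFiniteMeasure q] (f : α → ℝ) (hf : StronglyMeasurable f)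
    (C φ : ℝ) (hCp : ∀ᵐ a ∂p, |f a| ≤ C) (hCq : ∀ᵐ a ∂q, |f a| ≤ C) (hC0 : 0 ≤ C)
    (h : ∀ A : Set α, MeasurableSet A → |(p A).toReal - (q A).toReal| ≤ φ) :
    |∫ a, f a ∂p - ∫ a, f a ∂q| ≤ 2 * C * φ := by
  set ρ : Measure α := p + q with hρ
  have hpρ : p ≪ ρ := Measure.AbsolutelyContinuous.rfl.add_right q
  have hqρ : q ≪ ρ := by
    rw [hρ, add_comm]
    exact Measure.AbsolutelyContinuous.rfl.add_right p
  set g : α → ℝ := fun a => (p.rnDeriv ρ a).toReal with hgdef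
  set k : α → ℝ := fun a => (q.rnDeriv ρ a).toReal with hkdef
  have hg : Integrable g ρ := Measure.integrable_toReal_rnDeriv
  have hk : Integrable k ρ := Measure.integrable_toReal_rnDeriv
  have hfρ : ∀ᵐ a ∂ρ, |f a| ≤ C := by
    rw [hρ, ae_add_measure_iff]; exact ⟨hCp, hCq⟩
  have hfρ' : ∀ᵐ a ∂ρ, ‖f a‖ ≤ C := hfρ
  have hfg : Integrable (fun a => f a * g a) ρ :=
    hg.bdd_mul hf.aestronglyMeasurable hfρ'
  have hfk : Integrable (fun a => f a * k a) ρ :=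
    hk.bdd_mul hf.aestronglyMeasurable hfρ'
  have hip : ∫ a, f a ∂p = ∫ a, f a * g a ∂ρ := by
    rw [← integral_rnDeriv_smul hpρ]
    congr 1; ext a; simp [hgdef, mul_comm]
  have hiq : ∫ a, f a ∂q = ∫ a, f a * k a ∂ρ := by
    rw [← integral_rnDeriv_smul hqρ]
    congr 1; ext a; simp [hkdef, mul_comm]
  set A : Set α := {a | q.rnDeriv ρ a ≤ p.rnDeriv ρ a} with hAdef
  have hA : MeasurableSet A :=
    measurableSet_le (Measure.measurable_rnDeriv q ρ) (Measure.measurable_rnDeriv p ρ)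
  have hlt : ∀ᵐ a ∂ρ, p.rnDeriv ρ a < ⊤ ∧ q.rnDeriv ρ a < ⊤ :=
    (Measure.rnDeriv_lt_top p ρ).and (Measure.rnDeriv_lt_top q ρ)
  -- pointwise a.e. bounds
  have hboundA : ∀ᵐ a ∂ρ, a ∈ A → |f a * g a - f a * k a| ≤ C * (g a - k a) := by
    filter_upwards [hfρ, hlt] with a hfa hfin ha
    have hk_le : k a ≤ g a := ENNReal.toReal_le_toReal (hfin.2.ne) (hfin.1.ne) |>.mpr ha
    rw [← mul_sub, abs_mul]
    have : |g a - k a| = g a - k a := abs_of_nonneg (by linarith)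
    rw [this]
    exact mul_le_mul_of_nonneg_right hfa (by linarith)
  have hboundAc : ∀ᵐ a ∂ρ, a ∈ Aᶜ → |f a * g a - f a * k a| ≤ C * (k a - g a) := by
    filter_upwards [hfρ, hlt] with a hfa hfin ha
    have ha' : p.rnDeriv ρ a < q.rnDeriv ρ a := by
      simpa [hAdef, not_le] using ha
    have hg_le : g a ≤ k a :=
      ENNReal.toReal_le_toReal (hfin.1.ne) (hfin.2.ne) |>.mpr ha'.le
    rw [← mul_sub, abs_mul]
    have h1 : |g a - k a| = k a - g a := by
      rw [abs_sub_comm]; exact abs_of_nonneg (by linarith)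
    rw [h1]
    exact mul_le_mul_of_nonneg_right hfa (by linarith)
  have hsub : Integrable (fun a => f a * g a - f a * k a) ρ := hfg.sub hfk
  -- set integral computations
  have hsetg : ∀ s : Set α, MeasurableSet s → ∫ a in s, g a ∂ρ = (p s).toReal := by
    intro s hs
    exact Measure.setIntegral_toReal_rnDeriv hpρ s
  have hsetk : ∀ s : Set α, MeasurableSet s → ∫ a in s, k a ∂ρ = (q s).toReal := by
    intro s hs
    exact Measure.setIntegral_toReal_rnDeriv hqρ s
  have key : ∀ s : Set α, MeasurableSet s →
      (∀ᵐ a ∂ρ, a ∈ s → |f a * g a - f a * k a| ≤ C * (g a - k a)) →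
      |∫ a in s, (f a * g a - f a * k a) ∂ρ| ≤ C * ((p s).toReal - (q s).toReal) := by
    intro s hs hbd
    have h1 : |∫ a in s, (f a * g a - f a * k a) ∂ρ|
        ≤ ∫ a in s, |f a * g a - f a * k a| ∂ρ := by
      simpa using norm_integral_le_integral_norm (μ := ρ.restrict s)
        (f := fun a => f a * g a - f a * k a)
    have h2 : ∫ a in s, |f a * g a - f a * k a| ∂ρ ≤ ∫ a in s, C * (g a - k a) ∂ρ := by
      refine setIntegral_mono_on_ae (hsub.norm.restrict) (((hg.sub hk).const_mul C).restrict) hs ?_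
      filter_upwards [hbd] with a hba ha
      exact hba ha
    have h3 : ∫ a in s, C * (g a - k a) ∂ρ = C * ((p s).toReal - (q s).toReal) := by
      rw [integral_const_mul, integral_sub (hg.restrict) (hk.restrict), hsetg s hs, hsetk s hs]
    calc |∫ a in s, (f a * g a - f a * k a) ∂ρ| ≤ ∫ a in s, |f a * g a - f a * k a| ∂ρ := h1
      _ ≤ ∫ a in s, C * (g a - k a) ∂ρ := h2
      _ = C * ((p s).toReal - (q s).toReal) := h3
  have key2 : |∫ a in Aᶜ, (f a * g a - f a * k a) ∂ρ| ≤ C * ((q Aᶜ).toReal - (p Aᶜ).toReal) := by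
    have h1 : |∫ a in Aᶜ, (f a * g a - f a * k a) ∂ρ|
        ≤ ∫ a in Aᶜ, |f a * g a - f a * k a| ∂ρ := by
      simpa using norm_integral_le_integral_norm (μ := ρ.restrict Aᶜ)
        (f := fun a => f a * g a - f a * k a)
    have h2 : ∫ a in Aᶜ, |f a * g a - f a * k a| ∂ρ ≤ ∫ a in Aᶜ, C * (k a - g a) ∂ρ := by
      refine setIntegral_mono_on_ae (hsub.norm.restrict) (((hk.sub hg).const_mul C).restrict)
        hA.compl ?_
      filter_upwards [hboundAc] with a hba ha
      exact hba ha
    have h3 : ∫ a in Aᶜ, C * (k a - g a) ∂ρ = C * ((q Aᶜ).toReal - (p Aᶜ).toReal) := by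
      rw [integral_const_mul, integral_sub (hk.restrict) (hg.restrict),
        hsetg Aᶜ hA.compl, hsetk Aᶜ hA.compl]
    calc |∫ a in Aᶜ, (f a * g a - f a * k a) ∂ρ|
        ≤ ∫ a in Aᶜ, |f a * g a - f a * k a| ∂ρ := h1
      _ ≤ ∫ a in Aᶜ, C * (k a - g a) ∂ρ := h2
      _ = C * ((q Aᶜ).toReal - (p Aᶜ).toReal) := h3
  have key1 : |∫ a in A, (f a * g a - f a * k a) ∂ρ| ≤ C * ((p A).toReal - (q A).toReal) :=
    key A hA hboundA
  have hsplit : ∫ a, f a ∂p - ∫ a, f a ∂q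
      = (∫ a in A, (f a * g a - f a * k a) ∂ρ) + ∫ a in Aᶜ, (f a * g a - f a * k a) ∂ρ := by
    rw [hip, hiq, ← integral_sub hfg hfk, integral_add_compl hA hsub]
  have hbA := h A hA
  have hbAc := h Aᶜ hA.compl
  have e1 : C * ((p A).toReal - (q A).toReal) ≤ C * φ :=
    mul_le_mul_of_nonneg_left (le_trans (le_abs_self _) hbA) hC0
  have e2 : C * ((q Aᶜ).toReal - (p Aᶜ).toReal) ≤ C * φ :=
    mul_le_mul_of_nonneg_left (le_trans (neg_le_abs _ |>.trans_eq' (by ring)) hbAc) hC0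
  calc |∫ a, f a ∂p - ∫ a, f a ∂q|
      ≤ |∫ a in A, (f a * g a - f a * k a) ∂ρ|
        + |∫ a in Aᶜ, (f a * g a - f a * k a) ∂ρ| := by rw [hsplit]; exact abs_add_le _ _
    _ ≤ C * φ + C * φ := add_le_add (key1.trans e1) (key2.trans e2)
    _ = 2 * C * φ := by ring

theorem stmt0 {Ω : Type*} {F : MeasurableSpace Ω} (μ : Measure Ω) [IsProbabilityMeasure μ]
    (m G : MeasurableSpace Ω) (hm : m ≤ F) (hG : G ≤ F)
    (X : Ω → ℝ) (C φ : ℝ)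
    (hbd : ∀ᵐ ω ∂μ, |X ω| ≤ C)
    (hXmeas : StronglyMeasurable[G] X)
    (hmix : ∀ A B : Set Ω, MeasurableSet[G] A → MeasurableSet[m] B → 0 < μ B →
      |(μ (A ∩ B)).toReal / (μ B).toReal - (μ A).toReal| ≤ φ) :
    eLpNorm (μ[X|m] - fun _ => ∫ ω, X ω ∂μ) ⊤ μ ≤ ENNReal.ofReal (2 * C * φ) := by
  have hφ0 : 0 ≤ φ := by
    have := hmix ∅ univ MeasurableSet.empty MeasurableSet.univ (by simp)
    simpa using this
  have hC0 : 0 ≤ C := by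
    obtain ⟨ω, hω⟩ := hbd.exists
    exact (abs_nonneg _).trans hω
  have h2Cφ : 0 ≤ 2 * C * φ := by positivity
  have hXG : Measurable[G] X := hXmeas.measurable
  have hXSM : StronglyMeasurable[F] X := hXmeas.mono hG
  have hXint : Integrable X μ := by
    refine Integrable.mono' (integrable_const C) hXSM.aestronglyMeasurable ?_
    simpa [Real.norm_eq_abs] using hbd
  -- the bad set
  have hSG : MeasurableSet[G] {ω | ¬ |X ω| ≤ C} := by
    have he : {ω | ¬ |X ω| ≤ C} = {ω | C < |X ω|} := by ext ω; simp [not_le]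
    rw [he]
    exact measurableSet_lt measurable_const hXG.abs
  have hSμ : μ {ω | ¬ |X ω| ≤ C} = 0 := ae_iff.mp hbd
  -- key estimate for m-measurable sets
  have keyB : ∀ B : Set Ω, MeasurableSet[m] B → 0 < μ B →
      |(∫ a in B, X a ∂μ) - (μ B).toReal * ∫ a, X a ∂μ| ≤ 2 * C * φ * (μ B).toReal := by
    intro B hB hμB
    have hBF : MeasurableSet[F] B := hm B hB
    have hμBne : μ B ≠ 0 := hμB.ne'
    have hμBfin : μ B ≠ ⊤ := measure_ne_top μ B
    set ν := (μ B)⁻¹ • μ.restrict B with hνdef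
    have hνapp : ∀ s : Set Ω, MeasurableSet[F] s → ν s = (μ B)⁻¹ * μ (s ∩ B) := by
      intro s hs
      rw [hνdef]
      simp [Measure.restrict_apply hs]
    set p := ν.trim hG with hpdef
    set q := μ.trim hG with hqdef
    haveI hνfin : IsFiniteMeasure ν := by
      constructor
      rw [hνapp univ MeasurableSet.univ]
      simp only [univ_inter]
      exact ENNReal.mul_lt_top (ENNReal.inv_lt_top.mpr hμB) hμBfin.lt_top
    haveI hpfin : IsFiniteMeasure p := isFiniteMeasure_trim hG
    haveI hqfin : IsFiniteMeasure q := isFiniteMeasure_trim hG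
    have hpS : p {ω | ¬ |X ω| ≤ C} = 0 := by
      rw [hpdef, trim_measurableSet_eq hG hSG, hνapp _ (hG _ hSG)]
      have h0 : μ ({ω | ¬ |X ω| ≤ C} ∩ B) = 0 := measure_mono_null inter_subset_left hSμ
      rw [h0, mul_zero]
    have hqS : q {ω | ¬ |X ω| ≤ C} = 0 := by
      rw [hqdef, trim_measurableSet_eq hG hSG]
      exact hSμ
    have hCp : ∀ᵐ a ∂p, |X a| ≤ C := ae_iff.mpr hpS
    have hCq : ∀ᵐ a ∂q, |X a| ≤ C := ae_iff.mpr hqS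
    have hAB : ∀ A : Set Ω, MeasurableSet[G] A → |(p A).toReal - (q A).toReal| ≤ φ := by
      intro A hA
      have hp' : (p A).toReal = (μ (A ∩ B)).toReal / (μ B).toReal := by
        rw [hpdef, trim_measurableSet_eq hG hA, hνapp A (hG A hA), ENNReal.toReal_mul,
          ENNReal.toReal_inv]
        ring
      have hq' : (q A).toReal = (μ A).toReal := by
        rw [hqdef, trim_measurableSet_eq hG hA]
      rw [hp', hq']
      exact hmix A B hA hB hμB
    have htv := tv_bound p q X hXmeas C φ hCp hCq hC0 hAB
    have hip : ∫ a, X a ∂p = (μ B).toReal⁻¹ * ∫ a in B, X a ∂μ := by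
      rw [hpdef, ← integral_trim hG hXmeas, hνdef, integral_smul_measure, ENNReal.toReal_inv]
      simp [smul_eq_mul]
    have hiq : ∫ a, X a ∂q = ∫ a, X a ∂μ := by
      rw [hqdef, ← integral_trim hG hXmeas]
    rw [hip, hiq] at htv
    have hpos : 0 < (μ B).toReal := ENNReal.toReal_pos hμBne hμBfin
    have hmul := mul_le_mul_of_nonneg_left htv hpos.le
    calc |(∫ a in B, X a ∂μ) - (μ B).toReal * ∫ a, X a ∂μ|
        = (μ B).toReal * |(μ B).toReal⁻¹ * (∫ a in B, X a ∂μ) - ∫ a, X a ∂μ| := by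
          rw [← abs_of_pos hpos, ← abs_mul]
          congr 1
          field_simp
          rw [abs_of_pos hpos]; ring
      _ ≤ (μ B).toReal * (2 * C * φ) := hmul
      _ = 2 * C * φ * (μ B).toReal := by ring
  -- now conclude the a.e. bound on the conditional expectation
  set Y : Ω → ℝ := fun ω => (μ[X|m]) ω - ∫ a, X a ∂μ with hYdef
  have hYm : StronglyMeasurable[m] Y := stronglyMeasurable_condExp.sub stronglyMeasurable_const
  have hYint : Integrable Y μ := integrable_condExp.sub (integrable_const _)
  have hsetY : ∀ s : Set Ω, MeasurableSet[m] s →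
      ∫ a in s, Y a ∂μ = (∫ a in s, X a ∂μ) - (μ s).toReal * ∫ a, X a ∂μ := by
    intro s hs
    rw [hYdef]
    rw [integral_sub (integrable_condExp.restrict) ((integrable_const _).restrict)]
    rw [setIntegral_condExp hm hXint hs]
    simp [mul_comm, measureReal_def]
  have hsetYbd : ∀ s : Set Ω, MeasurableSet[m] s →
      |∫ a in s, Y a ∂μ| ≤ 2 * C * φ * (μ s).toReal := by
    intro s hs
    rcases eq_or_lt_of_le (zero_le : 0 ≤ μ s) with hz | hz
    · have hres : μ.restrict s = 0 := Measure.restrict_eq_zero.mpr hz.symm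
      rw [hsetY s hs, ← hz]
      simp [hres]
    · rw [hsetY s hs]
      exact keyB s hs hz
  have haeub : ∀ᵐ ω ∂μ, Y ω ≤ 2 * C * φ := by
    have hub : (0 : Ω → ℝ) ≤ᵐ[μ.trim hm] fun ω => 2 * C * φ - Y ω := by
      refine ae_nonneg_of_forall_setIntegral_nonneg ?_ ?_
      · exact ((integrable_const _).sub hYint).trim hm (stronglyMeasurable_const.sub hYm)
      · intro s hs _
        have hint : ∫ a in s, (2 * C * φ - Y a) ∂(μ.trim hm)
            = ∫ a in s, (2 * C * φ - Y a) ∂μ :=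
          (setIntegral_trim hm (stronglyMeasurable_const.sub hYm) hs).symm
        rw [hint, integral_sub ((integrable_const _).restrict) (hYint.restrict)]
        have h1 : ∫ _ in s, (2 * C * φ) ∂μ = 2 * C * φ * (μ s).toReal := by
          simp [mul_comm, measureReal_def]
        rw [h1]
        have h2 : ∫ a in s, Y a ∂μ ≤ 2 * C * φ * (μ s).toReal :=
          (le_abs_self _).trans (hsetYbd s hs)
        linarith
    have hub' := ae_le_of_ae_le_trim hub
    filter_upwards [hub'] with ω hω
    have h3 : (0:ℝ) ≤ 2 * C * φ - Y ω := hω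
    linarith
  have haelb : ∀ᵐ ω ∂μ, -(2 * C * φ) ≤ Y ω := by
    have hub : (0 : Ω → ℝ) ≤ᵐ[μ.trim hm] fun ω => Y ω + 2 * C * φ := by
      refine ae_nonneg_of_forall_setIntegral_nonneg ?_ ?_
      · exact (hYint.add (integrable_const _)).trim hm (hYm.add stronglyMeasurable_const)
      · intro s hs _
        have hint : ∫ a in s, (Y a + 2 * C * φ) ∂(μ.trim hm)
            = ∫ a in s, (Y a + 2 * C * φ) ∂μ :=
          (setIntegral_trim hm (hYm.add stronglyMeasurable_const) hs).symm
        rw [hint, integral_add (hYint.restrict) ((integrable_const _).restrict)]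
        have h1 : ∫ _ in s, (2 * C * φ) ∂μ = 2 * C * φ * (μ s).toReal := by
          simp [mul_comm, measureReal_def]
        rw [h1]
        have h2 : -(2 * C * φ * (μ s).toReal) ≤ ∫ a in s, Y a ∂μ :=
          neg_le_of_abs_le (hsetYbd s hs)
        linarith
    have hub' := ae_le_of_ae_le_trim hub
    filter_upwards [hub'] with ω hω
    have : (0:ℝ) ≤ Y ω + 2 * C * φ := hω
    linarith
  have hae : ∀ᵐ ω ∂μ, ‖Y ω‖ ≤ 2 * C * φ := by
    filter_upwards [haeub, haelb] with ω h1 h2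
    rw [Real.norm_eq_abs, abs_le]
    exact ⟨h2, h1⟩
  have hfun : (μ[X|m] - fun _ => ∫ ω, X ω ∂μ) = Y := rfl
  calc eLpNorm (μ[X|m] - fun _ => ∫ ω, X ω ∂μ) ⊤ μ = eLpNorm Y ⊤ μ := by rw [hfun]
    _ ≤ μ univ ^ (⊤:ENNReal).toReal⁻¹ * ENNReal.ofReal (2 * C * φ) := eLpNorm_le_of_ae_bound hae
    _ = ENNReal.ofReal (2 * C * φ) := by simp
end

section
/- In the setting of the environment process y_s = τ_{(cs, B_s)} ω: if a set A ∈ F satisfies ∫_{ℝ^d} 1_A(τ_{(cs,x)} ω) q_s(x) dx = 1_A(ω) for P-almost every ω and all s > 0 (where q_s is the d-dimensional Gaussian density with variance s), and the group T_{(t,x)} is strongly continuous, then 1_A(τ_{(t,x)} ω) = 1_A(ω) for all (t,x) ∈ ℝ^{d+1} and P-a.e. ω; consequently, by ergodicity of the group {τ_{(t,x)}}, P(A) ∈ {0, 1}. -/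
open MeasureTheory Filter Set

private lemma ind_eq_iff' {Ω : Type*} (A : Set Ω) (a b : Ω) :
    A.indicator (fun _ => (1:ℝ)) a = A.indicator (fun _ => (1:ℝ)) b ↔ (a ∈ A ↔ b ∈ A) := by
  by_cases ha : a ∈ A <;> by_cases hb : b ∈ A <;> simp [ha, hb]

theorem stmt10 (d : ℕ)
    {Ω : Type*} [MeasurableSpace Ω] (μ : Measure Ω) [IsProbabilityMeasure μ]
    (τ : ℝ × EuclideanSpace ℝ (Fin d) → Ω → Ω)
    (hgrp0 : ∀ ω, τ 0 ω = ω)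
    (hgrp : ∀ p q ω, τ (p + q) ω = τ p (τ q ω))
    (hmp : ∀ p, MeasurePreserving (τ p) μ μ)
    (hτmeas : Measurable (fun q : (ℝ × EuclideanSpace ℝ (Fin d)) × Ω => τ q.1 q.2))
    (hcont : ∀ S : Set Ω, MeasurableSet S →
      Tendsto (fun p : ℝ × EuclideanSpace ℝ (Fin d) => μ (symmDiff S (τ p ⁻¹' S)))
        (nhds 0) (nhds 0))
    (herg : ∀ S : Set Ω, MeasurableSet S →
      (∀ p, μ (symmDiff S (τ p ⁻¹' S)) = 0) → μ S = 0 ∨ μ S = 1)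
    (c : ℝ) (hc : 0 < c)
    (A : Set Ω) (hA : MeasurableSet A)
    (hInv : ∀ s : ℝ, 0 < s → ∀ᵐ ω ∂μ,
      (∫ x : EuclideanSpace ℝ (Fin d),
        Set.indicator A (fun _ => (1:ℝ)) (τ (c * s, x) ω) *
          ((2 * Real.pi * s) ^ (-(d : ℝ) / 2) * Real.exp (-‖x‖ ^ 2 / (2 * s)))) =
        Set.indicator A (fun _ => (1:ℝ)) ω) :
    (∀ p : ℝ × EuclideanSpace ℝ (Fin d), ∀ᵐ ω ∂μ,
        Set.indicator A (fun _ => (1:ℝ)) (τ p ω) = Set.indicator A (fun _ => (1:ℝ)) ω) ∧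
    (μ A = 0 ∨ μ A = 1) := by
  classical
  have hτp : ∀ p, Measurable (τ p) := fun p => (hmp p).measurable
  have hpre : ∀ p, MeasurableSet (τ p ⁻¹' A) := fun p => hτp p hA
  set D : ℝ × EuclideanSpace ℝ (Fin d) → Set Ω := fun p => symmDiff A (τ p ⁻¹' A) with hD
  have hDm : ∀ p, MeasurableSet (D p) := fun p => hA.symmDiff (hpre p)
  have hgrp_pre : ∀ p q : ℝ × EuclideanSpace ℝ (Fin d),
      τ (p + q) ⁻¹' A = τ q ⁻¹' (τ p ⁻¹' A) := by
    intro p q; ext ω; simp [Set.mem_preimage, hgrp p q ω]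
  have hsub : ∀ p q, μ (D (p + q)) ≤ μ (D p) + μ (D q) := by
    intro p q
    have h1 : D (p + q) ⊆ D q ∪ (τ q ⁻¹' D p) := by
      have ht := symmDiff_triangle (a := A) (b := τ q ⁻¹' A) (c := τ (p + q) ⁻¹' A)
      have h2 : symmDiff (τ q ⁻¹' A) (τ (p + q) ⁻¹' A) = τ q ⁻¹' (D p) := by
        rw [hgrp_pre p q, hD, Set.preimage_symmDiff]
      calc D (p + q) ⊆ symmDiff A (τ q ⁻¹' A) ∪ symmDiff (τ q ⁻¹' A) (τ (p + q) ⁻¹' A) := ht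
        _ = D q ∪ τ q ⁻¹' (D p) := by rw [h2]
    calc μ (D (p + q)) ≤ μ (D q ∪ τ q ⁻¹' D p) := measure_mono h1
      _ ≤ μ (D q) + μ (τ q ⁻¹' D p) := measure_union_le _ _
      _ = μ (D q) + μ (D p) := by
          rw [(hmp q).measure_preimage (hDm p).nullMeasurableSet]
      _ = μ (D p) + μ (D q) := add_comm _ _
  have hneg : ∀ p, μ (D (-p)) = μ (D p) := by
    intro p
    have hAA : τ p ⁻¹' (τ (-p) ⁻¹' A) = A := by
      ext ω
      have := hgrp (-p) p ω
      simp only [neg_add_cancel, hgrp0] at this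
      simp [Set.mem_preimage, ← this]
    have h0 : τ p ⁻¹' (D (-p)) = symmDiff (τ p ⁻¹' A) A := by
      rw [hD]; simp only [Set.preimage_symmDiff, hAA]
    calc μ (D (-p)) = μ (τ p ⁻¹' D (-p)) :=
          ((hmp p).measure_preimage (hDm _).nullMeasurableSet).symm
      _ = μ (symmDiff (τ p ⁻¹' A) A) := by rw [h0]
      _ = μ (D p) := by rw [symmDiff_comm]
  -- the core step
  have hkey : ∀ s : ℝ, 0 < s →
      ∀ᵐ x ∂(volume : Measure (EuclideanSpace ℝ (Fin d))), μ (D (c * s, x)) = 0 := by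
    intro s hs
    set q : EuclideanSpace ℝ (Fin d) → ℝ :=
      fun x => (2 * Real.pi * s) ^ (-(d : ℝ) / 2) * Real.exp (-‖x‖ ^ 2 / (2 * s)) with hqdef
    have hqx : ∀ x : EuclideanSpace ℝ (Fin d),
        (2 * Real.pi * s) ^ (-(d : ℝ) / 2) * Real.exp (-‖x‖ ^ 2 / (2 * s)) = q x :=
      fun _ => rfl
    have hqpos : ∀ x, 0 < q x := by
      intro x
      have h1 : (0:ℝ) < 2 * Real.pi * s := by positivity
      have := Real.rpow_pos_of_pos h1 (-(d : ℝ) / 2)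
      exact mul_pos this (Real.exp_pos _)
    have hb : (0:ℝ) < (2 * s)⁻¹ := by positivity
    have hexp_eq : ∀ x : EuclideanSpace ℝ (Fin d),
        Real.exp (-‖x‖ ^ 2 / (2 * s)) = Real.exp (-(2 * s)⁻¹ * ‖x‖ ^ 2) := by
      intro x; congr 1; field_simp
    have hexpint : Integrable (fun x : EuclideanSpace ℝ (Fin d) =>
        Real.exp (-(2 * s)⁻¹ * ‖x‖ ^ 2)) := by
      have hc' := GaussianFourier.integrable_cexp_neg_mul_sq_norm_add
        (b := ((2*s)⁻¹ : ℂ)) (by simpa using hb) 0 (0 : EuclideanSpace ℝ (Fin d))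
      have hn := hc'.norm
      refine hn.congr (Eventually.of_forall fun v => ?_)
      show ‖Complex.exp _‖ = _
      rw [show (-(2 * (s:ℂ))⁻¹ * (‖v‖:ℂ) ^ 2 + 0 * (((inner ℝ 0 v : ℝ)):ℂ))
            = (((-(2 * s)⁻¹ * ‖v‖ ^ 2 : ℝ)):ℂ) by push_cast; ring]
      rw [Complex.norm_exp, Complex.ofReal_re]
    have hqint : Integrable q := by
      rw [hqdef]
      simp_rw [hexp_eq]
      exact hexpint.const_mul _
    have hqmeas : Measurable q := by
      apply Measurable.const_mul
      exact (Real.continuous_exp.comp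
        (((continuous_norm.pow 2).neg).div_const (2 * s))).measurable
    have hqval : ∫ x, q x = 1 := by
      rw [hqdef]
      simp_rw [hexp_eq]
      rw [integral_const_mul, GaussianFourier.integral_rexp_neg_mul_sq_norm hb]
      have hfr : (Module.finrank ℝ (EuclideanSpace ℝ (Fin d)) : ℝ) = d := by
        simp [finrank_euclideanSpace_fin]
      rw [hfr]
      have hpi : Real.pi / (2 * s)⁻¹ = 2 * Real.pi * s := by field_simp
      rw [hpi]
      have hpos : (0:ℝ) < 2 * Real.pi * s := by positivity
      rw [← Real.rpow_add hpos, show (-(d:ℝ)/2 + d/2) = 0 by ring, Real.rpow_zero]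
    have hsec : ∀ᵐ ω ∂μ, ∀ᵐ x ∂(volume : Measure (EuclideanSpace ℝ (Fin d))),
        A.indicator (fun _ => (1:ℝ)) (τ (c * s, x) ω) = A.indicator (fun _ => (1:ℝ)) ω := by
      filter_upwards [hInv s hs] with ω hω
      simp_rw [hqx] at hω
      set g : EuclideanSpace ℝ (Fin d) → ℝ :=
        fun x => A.indicator (fun _ => (1:ℝ)) (τ (c * s, x) ω) with hgdef
      have hgx : ∀ x, A.indicator (fun _ => (1:ℝ)) (τ (c * s, x) ω) = g x := fun _ => rfl
      simp_rw [hgx] at hω ⊢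
      have hTmeas : Measurable fun x : EuclideanSpace ℝ (Fin d) => τ (c * s, x) ω :=
        hτmeas.comp ((measurable_const.prodMk measurable_id).prodMk measurable_const)
      have hgmeas : Measurable g := (measurable_const.indicator hA).comp hTmeas
      have hg01 : ∀ x, g x = 0 ∨ g x = 1 := by
        intro x; by_cases h : τ (c * s, x) ω ∈ A <;> simp [hgdef, h]
      have hgnn : ∀ x, 0 ≤ g x := fun x => by rcases hg01 x with h | h <;> rw [h] <;> norm_num
      have hgle : ∀ x, g x ≤ 1 := fun x => by rcases hg01 x with h | h <;> rw [h] <;> norm_num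
      have hgq_int : Integrable (fun x => g x * q x) := by
        refine hqint.mono' ((hgmeas.mul hqmeas).aestronglyMeasurable) ?_
        refine Eventually.of_forall fun x => ?_
        rw [Real.norm_eq_abs, abs_of_nonneg (mul_nonneg (hgnn x) (hqpos x).le)]
        calc g x * q x ≤ 1 * q x := mul_le_mul_of_nonneg_right (hgle x) (hqpos x).le
          _ = q x := one_mul _
      by_cases hωA : ω ∈ A
      · rw [Set.indicator_of_mem hωA] at hω
        rw [Set.indicator_of_mem hωA]
        have h1 : ∫ x, (q x - g x * q x) = 0 := by
          rw [integral_sub hqint hgq_int, hqval, hω]; ring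
        have hsubint : Integrable (fun x => q x - g x * q x) := hqint.sub hgq_int
        have hnn : (0 : EuclideanSpace ℝ (Fin d) → ℝ) ≤ᵐ[volume]
            fun x => q x - g x * q x := Eventually.of_forall fun x => by
          have h3 := mul_le_mul_of_nonneg_right (hgle x) (hqpos x).le
          simp only [one_mul] at h3
          simp only [Pi.zero_apply]
          linarith
        have h2 := (integral_eq_zero_iff_of_nonneg_ae hnn hsubint).mp h1
        filter_upwards [h2] with x hx
        simp only [Pi.zero_apply] at hx
        rcases mul_eq_zero.mp (show (1 - g x) * q x = 0 by rw [sub_mul, one_mul]; linarith) with h | h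
        · linarith
        · exact absurd h (hqpos x).ne'
      · rw [Set.indicator_of_notMem hωA] at hω
        rw [Set.indicator_of_notMem hωA]
        have hnn : (0 : EuclideanSpace ℝ (Fin d) → ℝ) ≤ᵐ[volume]
            fun x => g x * q x := Eventually.of_forall fun x => by
          simp only [Pi.zero_apply]
          exact mul_nonneg (hgnn x) (hqpos x).le
        have h2 := (integral_eq_zero_iff_of_nonneg_ae hnn hgq_int).mp hω
        filter_upwards [h2] with x hx
        simp only [Pi.zero_apply] at hx
        rcases mul_eq_zero.mp hx with h | h
        · exact h
        · exact absurd h (hqpos x).ne'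
    have hTmeas2 : Measurable fun z : Ω × EuclideanSpace ℝ (Fin d) => τ (c * s, z.2) z.1 :=
      hτmeas.comp ((measurable_const.prodMk measurable_snd).prodMk measurable_fst)
    set S : Set (Ω × EuclideanSpace ℝ (Fin d)) := {z | z.1 ∈ D (c * s, z.2)} with hSdef
    have hSeq : S = symmDiff (Prod.fst ⁻¹' A)
        ((fun z : Ω × EuclideanSpace ℝ (Fin d) => τ (c * s, z.2) z.1) ⁻¹' A) := by
      ext z
      simp only [hSdef, Set.mem_setOf_eq, hD, Set.mem_symmDiff, Set.mem_preimage]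
    have hSm : MeasurableSet S := by
      rw [hSeq]
      exact (measurable_fst hA).symmDiff (hTmeas2 hA)
    have hprod0 : (μ.prod volume) S = 0 := by
      rw [Measure.prod_apply hSm]
      have h0 : ∀ᵐ ω ∂μ, volume (Prod.mk ω ⁻¹' S) = 0 := by
        filter_upwards [hsec] with ω hω
        have hae : ∀ᵐ x ∂(volume : Measure (EuclideanSpace ℝ (Fin d))),
            x ∉ Prod.mk ω ⁻¹' S := by
          filter_upwards [hω] with x hx
          intro hmem
          have h1 : ω ∈ D (c * s, x) := hmem
          rw [hD] at h1
          rw [ind_eq_iff'] at hx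
          simp only [Set.mem_symmDiff, Set.mem_preimage] at h1
          tauto
        have h2 := ae_iff.mp hae
        exact (by simpa [not_not, Set.setOf_mem_eq] using h2 : volume {a | (ω, a) ∈ S} = 0)
      calc (∫⁻ ω, volume (Prod.mk ω ⁻¹' S) ∂μ) = ∫⁻ _, 0 ∂μ := lintegral_congr_ae h0
        _ = 0 := lintegral_zero
    have h3 : ∫⁻ x, μ ((fun ω => (ω, x)) ⁻¹' S) ∂(volume) = 0 := by
      rw [← Measure.prod_apply_symm hSm]; exact hprod0
    have hfm : Measurable fun x : EuclideanSpace ℝ (Fin d) => μ ((fun ω => (ω, x)) ⁻¹' S) :=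
      measurable_measure_prodMk_right hSm
    have h4 := (lintegral_eq_zero_iff hfm).mp h3
    filter_upwards [h4] with x hx
    simp only [Pi.zero_apply] at hx
    have hxeq : (fun ω => (ω, x)) ⁻¹' S = D (c * s, x) := rfl
    rw [hxeq] at hx
    exact hx
  have hzero2 : ∀ z : EuclideanSpace ℝ (Fin d), μ (D (0, z)) = 0 := by
    intro z
    have h1 := hkey 1 one_pos
    have h2 : ∀ᵐ x ∂(volume : Measure (EuclideanSpace ℝ (Fin d))),
        μ (D (c * 1, x + z)) = 0 := by
      rw [ae_iff] at h1 ⊢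
      have hpre2 : {x : EuclideanSpace ℝ (Fin d) | ¬ μ (D (c * 1, x + z)) = 0}
          = (fun x => x + z) ⁻¹' {x | ¬ μ (D (c * 1, x)) = 0} := rfl
      rw [hpre2]
      exact (measurePreserving_add_right volume z).quasiMeasurePreserving.preimage_null h1
    obtain ⟨x, hx1, hx2⟩ := (h1.and h2).exists
    have hle := hsub (c * 1, x + z) (-(c * 1, x))
    rw [hneg, hx2, hx1, add_zero] at hle
    have hpt : ((c * 1, x + z) : ℝ × EuclideanSpace ℝ (Fin d)) + (-(c * 1, x))
        = ((0 : ℝ), z) := by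
      simp [Prod.ext_iff]
    rw [hpt] at hle
    exact le_antisymm hle zero_le
  have hposc : ∀ t : ℝ, 0 < t → ∀ z, μ (D (t, z)) = 0 := by
    intro t ht z
    have hs : 0 < t / c := div_pos ht hc
    have hcs : c * (t / c) = t := by field_simp
    obtain ⟨x, hx⟩ := (hkey (t / c) hs).exists
    have hle := hsub (c * (t / c), x) ((0 : ℝ), z - x)
    rw [hx, hzero2, add_zero] at hle
    have hpt : ((c * (t / c), x) : ℝ × EuclideanSpace ℝ (Fin d)) + ((0:ℝ), z - x)
        = (t, z) := by
      simp [Prod.ext_iff, hcs]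
    rw [hpt] at hle
    exact le_antisymm hle zero_le
  have hzero : ∀ p, μ (D p) = 0 := by
    rintro ⟨t, z⟩
    rcases lt_trichotomy t 0 with ht | ht | ht
    · have h1 := hposc (-t) (by linarith) (-z)
      have h2 := hneg ((-t, -z))
      rw [h1] at h2
      simpa using h2
    · rw [ht]; exact hzero2 z
    · exact hposc t ht z
  refine ⟨?_, herg A hA hzero⟩
  intro p
  have h0 := hzero p
  rw [ae_iff]
  have hset : {ω | ¬ (A.indicator (fun _ => (1:ℝ)) (τ p ω) = A.indicator (fun _ => (1:ℝ)) ω)}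
      = D p := by
    ext ω
    rw [Set.mem_setOf_eq, ind_eq_iff', hD]
    simp only [Set.mem_symmDiff, Set.mem_preimage]
    tauto
  rw [hset]
  exact h0
end

section
/- Let V : ℝ × ℝ^d × Ω → ℝ be a stationary random field with covariance R(t,x), bounded so that sup_{t,x} |R(t,x)| < ∞, and satisfying ∫_ℝ sup_{x ∈ ℝ^d} |R(t,x)| dt < ∞. Let N ∼ t ε^{γ₁ − 2} intervals J_k = [(k−1)Δt + ε^{−γ₁}, kΔt] with Δt = ε^{−γ₁} + ε^{−γ₂}, 0 < γ₂ < γ₁ < 2. Assume additionally sup_x |R(s,x)| ≤ C s^{−λ} for s ≥ 1, with λ > 2/γ₁. Then for any continuous path b : [0,∞) → ℝ^d, E[(ε Σ_{k=1}^N ∫_{J_k} V(s, b(s)) ds)²] → 0 as ε → 0⁺. -/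
open MeasureTheory Filter Set Function

section AuxStmt11

variable {Ω : Type*} [MeasurableSpace Ω] {μ : Measure Ω} [IsProbabilityMeasure μ]

lemma aux_sm11 {f : ℝ → Ω → ℝ} (hf : Measurable fun p : ℝ × Ω => f p.1 p.2)
    (B : Set ℝ) : StronglyMeasurable fun ω => ∫ u in B, f u ω := by
  have h : StronglyMeasurable fun p : Ω × ℝ => f p.2 p.1 :=
    (hf.comp measurable_swap).stronglyMeasurable
  exact h.integral_prod_right'

lemma aux_pair11 {f : ℝ → Ω → ℝ} (hf : Measurable fun p : ℝ × Ω => f p.1 p.2)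
    {K : ℝ} (hK : 0 ≤ K) (hbd : ∀ s ω, |f s ω| ≤ K)
    {A B : Set ℝ} (hAfin : volume A < ⊤) (hBfin : volume B < ⊤) :
    ∫ ω, (∫ s in A, f s ω) * (∫ u in B, f u ω) ∂μ
      = ∫ s in A, ∫ u in B, (∫ ω, f s ω * f u ω ∂μ) := by
  haveI : IsFiniteMeasure (volume.restrict A) :=
    ⟨by rwa [Measure.restrict_apply_univ]⟩
  haveI : IsFiniteMeasure (volume.restrict B) :=
    ⟨by rwa [Measure.restrict_apply_univ]⟩
  set c : Ω → ℝ := fun ω => ∫ u in B, f u ω with hc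
  have hcSM : StronglyMeasurable c := aux_sm11 hf B
  have hcbd : ∀ ω, |c ω| ≤ K * (volume B).toReal := by
    intro ω
    have := norm_setIntegral_le_of_norm_le_const (f := fun u => f u ω) (μ := volume)
      hBfin (fun u _ => by simpa [Real.norm_eq_abs] using hbd u ω)
    simpa [Real.norm_eq_abs, measureReal_def] using this
  have h1 : ∀ ω : Ω, (∫ s in A, f s ω) * c ω = ∫ s in A, f s ω * c ω := fun ω =>
    (integral_mul_const (μ := volume.restrict A) (c ω) fun s => f s ω).symm
  calc ∫ ω, (∫ s in A, f s ω) * (∫ u in B, f u ω) ∂μ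
      = ∫ ω, (∫ s in A, f s ω * c ω) ∂μ := integral_congr_ae (ae_of_all _ h1)
    _ = ∫ s in A, ∫ ω, f s ω * c ω ∂μ := by
        apply integral_integral_swap
        refine Integrable.mono' (integrable_const (K * (K * (volume B).toReal))) ?_
          (ae_of_all _ fun p => ?_)
        · exact (((hf.comp measurable_swap).stronglyMeasurable).mul
            (hcSM.comp_measurable measurable_fst)).aestronglyMeasurable
        · calc ‖f p.2 p.1 * c p.1‖ = |f p.2 p.1| * |c p.1| := abs_mul _ _
            _ ≤ K * (K * (volume B).toReal) :=
              mul_le_mul (hbd _ _) (hcbd _) (abs_nonneg _) hK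
    _ = ∫ s in A, ∫ u in B, (∫ ω, f s ω * f u ω ∂μ) := by
        refine integral_congr_ae (ae_of_all _ fun s => ?_)
        dsimp only
        have h2 : ∀ ω : Ω, f s ω * c ω = ∫ u in B, f s ω * f u ω := fun ω =>
          (integral_const_mul (μ := volume.restrict B) (f s ω) fun u => f u ω).symm
        rw [integral_congr_ae (ae_of_all _ h2)]
        apply integral_integral_swap
        refine Integrable.mono' (integrable_const (K * K)) ?_
          (ae_of_all _ fun p => ?_)
        · refine ((hf.comp ((measurable_const.prodMk measurable_fst) :
              Measurable fun p : Ω × ℝ => (s, p.1))).mul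
            (hf.comp (measurable_snd.prodMk measurable_fst))).aestronglyMeasurable
        · calc ‖f s p.1 * f p.2 p.1‖ = |f s p.1| * |f p.2 p.1| := abs_mul _ _
            _ ≤ K * K := mul_le_mul (hbd _ _) (hbd _ _) (abs_nonneg _) hK

lemma aux_shift11 {g : ℝ → ℝ} (hgint : Integrable g) (hg0 : ∀ x, 0 ≤ g x)
    (s a c : ℝ) (h : a ≤ c) :
    ∫ u in Ioc a c, g (s - u) ≤ ∫ x, g x := by
  have h1 : ∫ u in Ioc a c, g (s - u) = ∫ x in Ioc (s - c) (s - a), g x := by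
    rw [← intervalIntegral.integral_of_le h, intervalIntegral.integral_comp_sub_left g s,
      intervalIntegral.integral_of_le (by linarith)]
  rw [h1]
  exact setIntegral_le_integral hgint (ae_of_all _ hg0)

end AuxStmt11

set_option maxHeartbeats 1000000 in
/-- Vanishing of the second moment of the contributions of the intervals
`J_k = [(k-1)Δt + ε^{-γ₁}, kΔt]`, `Δt = ε^{-γ₁} + ε^{-γ₂}`, `N ~ t ε^{γ₁-2}`,
for a frozen continuous path `b`, under integrability of `sup_x |R(·,x)|` and
the polynomial decay `sup_x |R(s,x)| ≤ C s^{-λ}` with `λ > 2/γ₁`. -/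
theorem stmt11 (d : ℕ)
    {Ω : Type*} [MeasurableSpace Ω] (μ : Measure Ω) [IsProbabilityMeasure μ]
    (V : ℝ → EuclideanSpace ℝ (Fin d) → Ω → ℝ)
    (hVmeas : Measurable (fun q : (ℝ × EuclideanSpace ℝ (Fin d)) × Ω => V q.1.1 q.1.2 q.2))
    (K : ℝ) (hVbd : ∀ s x ω, |V s x ω| ≤ K)
    (R : ℝ → EuclideanSpace ℝ (Fin d) → ℝ)
    (hcov : ∀ s x u y, ∫ ω, V s x ω * V u y ω ∂μ = R (s - u) (x - y))
    (g : ℝ → ℝ) (hg : ∀ s x, |R s x| ≤ g s) (hgint : Integrable g)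
    (γ₁ γ₂ lam Cg t : ℝ) (hγ₂ : 0 < γ₂) (hγ12 : γ₂ < γ₁) (hγ₁ : γ₁ < 2)
    (hlam : 2 / γ₁ < lam) (hdecay : ∀ s : ℝ, 1 ≤ s → g s ≤ Cg * s ^ (-lam))
    (ht : 0 < t)
    (b : ℝ → EuclideanSpace ℝ (Fin d)) (hb : Continuous b) :
    Tendsto (fun ε : ℝ =>
        ∫ ω, (ε * ∑ k ∈ Finset.Icc 1 ⌊t / (ε ^ 2 * (ε ^ (-γ₁) + ε ^ (-γ₂)))⌋₊,
          ∫ s in (((k : ℝ) - 1) * (ε ^ (-γ₁) + ε ^ (-γ₂)) + ε ^ (-γ₁))..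
              ((k : ℝ) * (ε ^ (-γ₁) + ε ^ (-γ₂))),
            V s (b s) ω) ^ 2 ∂μ)
      (nhdsWithin 0 (Set.Ioi 0)) (nhds 0) := by
  classical
  have hγ₁pos : 0 < γ₁ := hγ₂.trans hγ12
  have hlam0 : 0 < lam := lt_trans (div_pos two_pos hγ₁pos) hlam
  have hγlam : 2 < γ₁ * lam := by
    have h := (div_lt_iff₀ hγ₁pos).mp hlam
    nlinarith
  have hΩ : Nonempty Ω := by
    by_contra h
    rw [not_nonempty_iff] at h
    have h1 : μ univ = 1 := measure_univ
    rw [Set.univ_eq_empty_iff.mpr h, measure_empty] at h1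
    exact zero_ne_one h1
  obtain ⟨ω₀⟩ := hΩ
  have hK : 0 ≤ K := (abs_nonneg _).trans (hVbd 0 0 ω₀)
  have hg0 : ∀ x, 0 ≤ g x := fun x => (abs_nonneg _).trans (hg x 0)
  have hGnn : 0 ≤ ∫ x, g x := integral_nonneg hg0
  have hCg : 0 ≤ Cg := by
    have h := hdecay 1 le_rfl
    have h2 := hg0 1
    rw [Real.one_rpow, mul_one] at h
    linarith
  have hc2pos : 0 < γ₁ * lam + 2 * γ₁ - 2 * γ₂ - 2 := by linarith
  -- the frozen field along the path
  set f : ℝ → Ω → ℝ := fun s ω => V s (b s) ω with hfdef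
  have hfmeas : Measurable fun p : ℝ × Ω => f p.1 p.2 := by
    have hm : Measurable fun p : ℝ × Ω => ((p.1, b p.1), p.2) :=
      ((measurable_fst.prodMk (hb.measurable.comp measurable_fst)).prodMk measurable_snd)
    exact hVmeas.comp hm
  have hfbd : ∀ s ω, |f s ω| ≤ K := fun s ω => hVbd s (b s) ω
  -- the covariance along the path
  set Q : ℝ → ℝ → ℝ := fun s u => ∫ ω, f s ω * f u ω ∂μ with hQdef
  have hQSM : StronglyMeasurable fun p : ℝ × ℝ => Q p.1 p.2 := by
    rw [hQdef]
    have hm : StronglyMeasurable fun q : (ℝ × ℝ) × Ω => f q.1.1 q.2 * f q.1.2 q.2 :=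
      ((hfmeas.comp ((measurable_fst.comp measurable_fst).prodMk measurable_snd)).mul
        (hfmeas.comp ((measurable_snd.comp measurable_fst).prodMk measurable_snd))).stronglyMeasurable
    exact hm.integral_prod_right'
  have hQg : ∀ s u, |Q s u| ≤ g (s - u) := by
    intro s u
    have h : Q s u = R (s - u) (b s - b u) := hcov s (b s) u (b u)
    rw [h]; exact hg _ _
  have hQg' : ∀ s u, |Q s u| ≤ g (u - s) := by
    intro s u
    have h : Q s u = ∫ ω, f u ω * f s ω ∂μ := by
      rw [hQdef]; exact integral_congr_ae (ae_of_all _ fun ω => mul_comm _ _)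
    rw [h, hcov u (b u) s (b s)]; exact hg _ _
  have hQK : ∀ s u, |Q s u| ≤ K * K := by
    intro s u
    have h := norm_integral_le_of_norm_le_const (μ := μ)
      (f := fun ω => f s ω * f u ω) (C := K * K)
      (ae_of_all _ fun ω => by
        rw [Real.norm_eq_abs, abs_mul]
        exact mul_le_mul (hfbd _ _) (hfbd _ _) (abs_nonneg _) hK)
    rw [hQdef]
    simpa [Real.norm_eq_abs, measure_univ] using h
  -- limit of the explicit upper function
  have hF : Tendsto (fun ε : ℝ => t * ε ^ (γ₁ - γ₂) * (∫ x, g x)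
      + t ^ 2 * Cg * ε ^ (γ₁ * lam + 2 * γ₁ - 2 * γ₂ - 2))
      (nhdsWithin 0 (Set.Ioi 0)) (nhds 0) := by
    have l1 : Tendsto (fun ε : ℝ => ε ^ (γ₁ - γ₂)) (nhdsWithin 0 (Set.Ioi 0)) (nhds 0) := by
      have h := (Real.continuousAt_rpow_const 0 (γ₁ - γ₂) (Or.inr (by linarith))).tendsto
      rw [Real.zero_rpow (by intro hc; rw [sub_eq_zero] at hc; linarith)] at h
      exact h.mono_left nhdsWithin_le_nhds
    have l2 : Tendsto (fun ε : ℝ => ε ^ (γ₁ * lam + 2 * γ₁ - 2 * γ₂ - 2))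
        (nhdsWithin 0 (Set.Ioi 0)) (nhds 0) := by
      have h := (Real.continuousAt_rpow_const 0 (γ₁ * lam + 2 * γ₁ - 2 * γ₂ - 2)
        (Or.inr hc2pos.le)).tendsto
      rw [Real.zero_rpow hc2pos.ne'] at h
      exact h.mono_left nhdsWithin_le_nhds
    have := ((l1.const_mul t).mul_const (∫ x, g x)).add (l2.const_mul (t ^ 2 * Cg))
    simpa using this
  refine tendsto_of_tendsto_of_tendsto_of_le_of_le' tendsto_const_nhds hF
    (Eventually.of_forall fun ε => integral_nonneg fun ω => sq_nonneg _) ?_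
  filter_upwards [Ioo_mem_nhdsGT_of_mem (Set.left_mem_Ico.mpr zero_lt_one)] with ε hεIoo
  obtain ⟨hε0, hε1⟩ := hεIoo
  -- abbreviations
  have hE1pos : 0 < ε ^ (-γ₁) := Real.rpow_pos_of_pos hε0 _
  have hE2pos : 0 < ε ^ (-γ₂) := Real.rpow_pos_of_pos hε0 _
  have hE1one : 1 ≤ ε ^ (-γ₁) :=
    Real.one_le_rpow_of_pos_of_le_one_of_nonpos hε0 hε1.le (by linarith)
  have hΔpos : 0 < ε ^ (-γ₁) + ε ^ (-γ₂) := by positivity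
  set N : ℕ := ⌊t / (ε ^ 2 * (ε ^ (-γ₁) + ε ^ (-γ₂)))⌋₊ with hNdef
  have hNle : (N : ℝ) ≤ t / (ε ^ 2 * (ε ^ (-γ₁) + ε ^ (-γ₂))) :=
    Nat.floor_le (by positivity)
  have hN2 : (N : ℝ) ≤ t * ε ^ (γ₁ - 2) := by
    refine hNle.trans ?_
    rw [div_le_iff₀ (by positivity)]
    have h1 : ε ^ (γ₁ - 2) * (ε ^ 2 * ε ^ (-γ₁)) = 1 := by
      rw [← Real.rpow_natCast ε 2, ← Real.rpow_add hε0, ← Real.rpow_add hε0]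
      have he : γ₁ - 2 + (((2:ℕ):ℝ) + -γ₁) = 0 := by push_cast; ring
      rw [he, Real.rpow_zero]
    have key : 1 ≤ ε ^ (γ₁ - 2) * (ε ^ 2 * (ε ^ (-γ₁) + ε ^ (-γ₂))) := by
      have h2 : 0 < ε ^ (γ₁ - 2) * (ε ^ 2 * ε ^ (-γ₂)) := by positivity
      nlinarith [h1]
    calc t = t * 1 := (mul_one t).symm
      _ ≤ t * (ε ^ (γ₁ - 2) * (ε ^ 2 * (ε ^ (-γ₁) + ε ^ (-γ₂)))) :=
          mul_le_mul_of_nonneg_left key ht.le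
      _ = t * ε ^ (γ₁ - 2) * (ε ^ 2 * (ε ^ (-γ₁) + ε ^ (-γ₂))) := by ring
  have hab : ∀ k : ℕ, ((k : ℝ) - 1) * (ε ^ (-γ₁) + ε ^ (-γ₂)) + ε ^ (-γ₁)
      ≤ (k : ℝ) * (ε ^ (-γ₁) + ε ^ (-γ₂)) := by
    intro k; nlinarith
  set J : ℕ → Set ℝ := fun k =>
    Ioc (((k : ℝ) - 1) * (ε ^ (-γ₁) + ε ^ (-γ₂)) + ε ^ (-γ₁))
      ((k : ℝ) * (ε ^ (-γ₁) + ε ^ (-γ₂))) with hJdef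
  have hJvol : ∀ k, volume (J k) = ENNReal.ofReal (ε ^ (-γ₂)) := by
    intro k
    rw [hJdef]
    rw [Real.volume_Ioc]
    congr 1
    ring
  have hJfin : ∀ k, volume (J k) < ⊤ := fun k => by
    rw [hJvol]; exact ENNReal.ofReal_lt_top
  have hJtoReal : ∀ k, (volume (J k)).toReal = ε ^ (-γ₂) := fun k => by
    rw [hJvol]; exact ENNReal.toReal_ofReal hE2pos.le
  -- strong measurability facts
  have hISM : ∀ k, StronglyMeasurable fun ω => ∫ s in J k, f s ω :=
    fun k => aux_sm11 hfmeas (J k)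
  have hIbd : ∀ (k : ℕ) (ω : Ω), |∫ s in J k, f s ω| ≤ K * ε ^ (-γ₂) := by
    intro k ω
    have h := norm_setIntegral_le_of_norm_le_const (f := fun s => f s ω) (μ := volume) (hJfin k)
      (fun s _ => by simpa [Real.norm_eq_abs] using hfbd s ω)
    rw [measureReal_def, hJtoReal k] at h
    simpa [Real.norm_eq_abs] using h
  have hInt : ∀ m n : ℕ,
      Integrable (fun ω => (∫ s in J m, f s ω) * (∫ u in J n, f u ω)) μ := by
    intro m n
    refine Integrable.mono' (integrable_const ((K * ε ^ (-γ₂)) * (K * ε ^ (-γ₂))))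
      ((hISM m).mul (hISM n)).aestronglyMeasurable (ae_of_all _ fun ω => ?_)
    rw [Real.norm_eq_abs, abs_mul]
    exact mul_le_mul (hIbd m ω) (hIbd n ω) (abs_nonneg _) (by positivity)
  have hQuSM : ∀ (sv : ℝ), StronglyMeasurable fun u => Q sv u :=
    fun sv => hQSM.comp_measurable (measurable_const.prodMk measurable_id)
  have hQrowSM : ∀ n, StronglyMeasurable fun s => ∫ u in J n, Q s u :=
    fun n => hQSM.integral_prod_right'
  -- convert the statement to set integrals over J k and expand the square
  have step1 : ∀ ω : Ω,
      (ε * ∑ k ∈ Finset.Icc 1 N,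
        ∫ s in (((k : ℝ) - 1) * (ε ^ (-γ₁) + ε ^ (-γ₂)) + ε ^ (-γ₁))..
            ((k : ℝ) * (ε ^ (-γ₁) + ε ^ (-γ₂))), V s (b s) ω) ^ 2
      = ε ^ 2 * ∑ m ∈ Finset.Icc 1 N, ∑ n ∈ Finset.Icc 1 N,
          (∫ s in J m, f s ω) * (∫ u in J n, f u ω) := by
    intro ω
    have hconv : ∀ k : ℕ,
        (∫ s in (((k : ℝ) - 1) * (ε ^ (-γ₁) + ε ^ (-γ₂)) + ε ^ (-γ₁))..
            ((k : ℝ) * (ε ^ (-γ₁) + ε ^ (-γ₂))), V s (b s) ω)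
        = ∫ s in J k, f s ω := by
      intro k
      rw [hJdef, hfdef]
      exact intervalIntegral.integral_of_le (hab k)
    simp_rw [hconv]
    rw [mul_pow]
    congr 1
    rw [pow_two, Finset.sum_mul_sum]
  -- the integral identity
  have hPid : (∫ ω, (ε * ∑ k ∈ Finset.Icc 1 N,
        ∫ s in (((k : ℝ) - 1) * (ε ^ (-γ₁) + ε ^ (-γ₂)) + ε ^ (-γ₁))..
            ((k : ℝ) * (ε ^ (-γ₁) + ε ^ (-γ₂))), V s (b s) ω) ^ 2 ∂μ)
      = ε ^ 2 * ∑ m ∈ Finset.Icc 1 N, ∑ n ∈ Finset.Icc 1 N,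
          ∫ s in J m, ∫ u in J n, Q s u := by
    calc (∫ ω, (ε * ∑ k ∈ Finset.Icc 1 N,
          ∫ s in (((k : ℝ) - 1) * (ε ^ (-γ₁) + ε ^ (-γ₂)) + ε ^ (-γ₁))..
              ((k : ℝ) * (ε ^ (-γ₁) + ε ^ (-γ₂))), V s (b s) ω) ^ 2 ∂μ)
        = ∫ ω, (ε ^ 2 * ∑ m ∈ Finset.Icc 1 N, ∑ n ∈ Finset.Icc 1 N,
            (∫ s in J m, f s ω) * (∫ u in J n, f u ω)) ∂μ :=
          integral_congr_ae (ae_of_all _ step1)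
      _ = ε ^ 2 * ∫ ω, (∑ m ∈ Finset.Icc 1 N, ∑ n ∈ Finset.Icc 1 N,
            (∫ s in J m, f s ω) * (∫ u in J n, f u ω)) ∂μ := integral_const_mul _ _
      _ = ε ^ 2 * ∑ m ∈ Finset.Icc 1 N, ∑ n ∈ Finset.Icc 1 N,
            ∫ ω, (∫ s in J m, f s ω) * (∫ u in J n, f u ω) ∂μ := by
          rw [integral_finset_sum _ (fun m _ =>
            integrable_finset_sum _ (fun n _ => hInt m n))]
          congr 1
          exact Finset.sum_congr rfl fun m _ => integral_finset_sum _ (fun n _ => hInt m n)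
      _ = ε ^ 2 * ∑ m ∈ Finset.Icc 1 N, ∑ n ∈ Finset.Icc 1 N,
            ∫ s in J m, ∫ u in J n, Q s u := by
          congr 1
          refine Finset.sum_congr rfl fun m _ => Finset.sum_congr rfl fun n _ => ?_
          rw [hQdef]
          exact aux_pair11 hfmeas hK hfbd (hJfin m) (hJfin n)
  -- diagonal-type bound, valid for all pairs
  have hIntQ : ∀ (sv : ℝ) (n : ℕ), IntegrableOn (fun u => |Q sv u|) (J n) := by
    intro sv n
    haveI : IsFiniteMeasure (volume.restrict (J n)) :=
      ⟨by rw [Measure.restrict_apply_univ]; exact hJfin n⟩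
    refine Integrable.mono' (integrable_const (K * K))
      ((hQuSM sv).measurable.abs.aestronglyMeasurable) (ae_of_all _ fun u => ?_)
    rw [Real.norm_eq_abs, abs_abs]
    exact hQK sv u
  have hdiag : ∀ m n : ℕ, |∫ s in J m, ∫ u in J n, Q s u| ≤ (∫ x, g x) * ε ^ (-γ₂) := by
    intro m n
    have inner : ∀ sv : ℝ, ‖∫ u in J n, Q sv u‖ ≤ ∫ x, g x := by
      intro sv
      rw [Real.norm_eq_abs]
      calc |∫ u in J n, Q sv u| ≤ ∫ u in J n, |Q sv u| := by
            simpa [Real.norm_eq_abs] using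
              norm_integral_le_integral_norm (μ := volume.restrict (J n)) fun u => Q sv u
        _ ≤ ∫ u in J n, g (sv - u) := by
            refine setIntegral_mono_on (hIntQ sv n)
              ((hgint.comp_sub_left sv).integrableOn) ?_ (fun u _ => hQg sv u)
            rw [hJdef]; exact measurableSet_Ioc
        _ ≤ ∫ x, g x := by
            rw [hJdef]
            exact aux_shift11 hgint hg0 sv _ _ (hab n)
    have h := norm_setIntegral_le_of_norm_le_const (μ := volume) (hJfin m)
      (fun sv _ => inner sv)
    rw [measureReal_def, hJtoReal m] at h
    simpa [Real.norm_eq_abs] using h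
  -- off-diagonal bound
  have hoff : ∀ m n : ℕ, m ≠ n → 1 ≤ m → 1 ≤ n →
      |∫ s in J m, ∫ u in J n, Q s u|
        ≤ (Cg * ε ^ (γ₁ * lam) * ε ^ (-γ₂)) * ε ^ (-γ₂) := by
    intro m n hmn hm1 hn1
    have hdec : ∀ x : ℝ, ε ^ (-γ₁) ≤ x → g x ≤ Cg * ε ^ (γ₁ * lam) := by
      intro x hx
      have hx1 : (1:ℝ) ≤ x := hE1one.trans hx
      have h1 : g x ≤ Cg * x ^ (-lam) := hdecay x hx1
      have h2 : x ^ (-lam) ≤ (ε ^ (-γ₁)) ^ (-lam) := by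
        rw [Real.rpow_neg (le_trans (by norm_num) hx1), Real.rpow_neg hE1pos.le]
        have h3 : (ε ^ (-γ₁)) ^ lam ≤ x ^ lam :=
          Real.rpow_le_rpow hE1pos.le hx hlam0.le
        have h4 : (0:ℝ) < (ε ^ (-γ₁)) ^ lam := Real.rpow_pos_of_pos hE1pos _
        exact inv_anti₀ h4 h3
      have h5 : (ε ^ (-γ₁) : ℝ) ^ (-lam) = ε ^ (γ₁ * lam) := by
        rw [← Real.rpow_mul hε0.le]
        congr 1
        ring
      calc g x ≤ Cg * x ^ (-lam) := h1
        _ ≤ Cg * (ε ^ (-γ₁)) ^ (-lam) := by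
            exact mul_le_mul_of_nonneg_left h2 hCg
        _ = Cg * ε ^ (γ₁ * lam) := by rw [h5]
    have hgap : ∀ s ∈ J m, ∀ u ∈ J n, |Q s u| ≤ Cg * ε ^ (γ₁ * lam) := by
      intro s hs u hu
      rw [hJdef, Set.mem_Ioc] at hs hu
      rcases lt_or_gt_of_ne hmn with h | h
      · -- m < n, so u - s ≥ ε ^ (-γ₁)
        have hmn' : (m : ℝ) ≤ (n : ℝ) - 1 := by
          have : m + 1 ≤ n := h
          have := (Nat.cast_le (α := ℝ)).mpr this
          push_cast at this
          linarith
        have hgapd : ε ^ (-γ₁) ≤ u - s := by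
          have h1 := hs.2
          have h2 := hu.1
          linarith [mul_le_mul_of_nonneg_right hmn' hΔpos.le]
        exact (hQg' s u).trans (hdec _ hgapd)
      · -- n < m, so s - u ≥ ε ^ (-γ₁)
        have hmn' : (n : ℝ) ≤ (m : ℝ) - 1 := by
          have : n + 1 ≤ m := h
          have := (Nat.cast_le (α := ℝ)).mpr this
          push_cast at this
          linarith
        have hgapd : ε ^ (-γ₁) ≤ s - u := by
          have h1 := hu.2
          have h2 := hs.1
          linarith [mul_le_mul_of_nonneg_right hmn' hΔpos.le]
        exact (hQg s u).trans (hdec _ hgapd)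
    have inner : ∀ sv, sv ∈ J m → ‖∫ u in J n, Q sv u‖
        ≤ (Cg * ε ^ (γ₁ * lam)) * ε ^ (-γ₂) := by
      intro sv hsv
      have h := norm_setIntegral_le_of_norm_le_const (f := fun u => Q sv u) (μ := volume) (hJfin n)
        (fun u hu => by rw [Real.norm_eq_abs]; exact hgap sv hsv u hu)
      rw [measureReal_def, hJtoReal n] at h
      exact h
    have h := norm_setIntegral_le_of_norm_le_const (μ := volume) (hJfin m)
      inner
    rw [measureReal_def, hJtoReal m, Real.norm_eq_abs] at h
    exact h
  -- put the bounds together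
  have hcard : (Finset.Icc 1 N).card = N := by rw [Nat.card_Icc]; omega
  have hrow : ∀ m ∈ Finset.Icc 1 N,
      ∑ n ∈ Finset.Icc 1 N, |∫ s in J m, ∫ u in J n, Q s u|
        ≤ (∫ x, g x) * ε ^ (-γ₂)
          + (N : ℝ) * ((Cg * ε ^ (γ₁ * lam) * ε ^ (-γ₂)) * ε ^ (-γ₂)) := by
    intro m hm
    rw [← Finset.add_sum_erase _ _ hm]
    refine add_le_add (hdiag m m) ?_
    have hm1 : 1 ≤ m := (Finset.mem_Icc.mp hm).1
    have hsum := Finset.sum_le_card_nsmul ((Finset.Icc 1 N).erase m)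
      (fun n => |∫ s in J m, ∫ u in J n, Q s u|)
      ((Cg * ε ^ (γ₁ * lam) * ε ^ (-γ₂)) * ε ^ (-γ₂))
      (fun n hn => hoff m n (Ne.symm (Finset.ne_of_mem_erase hn)) hm1
        (Finset.mem_Icc.mp (Finset.mem_of_mem_erase hn)).1)
    refine hsum.trans ?_
    rw [nsmul_eq_mul]
    have hcle : (((Finset.Icc 1 N).erase m).card : ℝ) ≤ (N : ℝ) := by
      have := Finset.card_erase_le (s := Finset.Icc 1 N) (a := m)
      rw [hcard] at this
      exact_mod_cast this
    exact mul_le_mul_of_nonneg_right hcle (by positivity)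
  have htot : ∑ m ∈ Finset.Icc 1 N, ∑ n ∈ Finset.Icc 1 N, ∫ s in J m, ∫ u in J n, Q s u
      ≤ (N : ℝ) * ((∫ x, g x) * ε ^ (-γ₂)
          + (N : ℝ) * ((Cg * ε ^ (γ₁ * lam) * ε ^ (-γ₂)) * ε ^ (-γ₂))) := by
    calc ∑ m ∈ Finset.Icc 1 N, ∑ n ∈ Finset.Icc 1 N, ∫ s in J m, ∫ u in J n, Q s u
        ≤ ∑ m ∈ Finset.Icc 1 N, ∑ n ∈ Finset.Icc 1 N, |∫ s in J m, ∫ u in J n, Q s u| :=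
          Finset.sum_le_sum fun m _ => Finset.sum_le_sum fun n _ => le_abs_self _
      _ ≤ ∑ m ∈ Finset.Icc 1 N, ((∫ x, g x) * ε ^ (-γ₂)
          + (N : ℝ) * ((Cg * ε ^ (γ₁ * lam) * ε ^ (-γ₂)) * ε ^ (-γ₂))) :=
          Finset.sum_le_sum hrow
      _ = (N : ℝ) * ((∫ x, g x) * ε ^ (-γ₂)
          + (N : ℝ) * ((Cg * ε ^ (γ₁ * lam) * ε ^ (-γ₂)) * ε ^ (-γ₂))) := by
          rw [Finset.sum_const, hcard, nsmul_eq_mul]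
  -- final numeric estimate
  have hNnn : (0:ℝ) ≤ (N : ℝ) := Nat.cast_nonneg N
  have hXnn : (0:ℝ) ≤ t * ε ^ (γ₁ - 2) := by positivity
  have h3 : ε ^ 2 * ((N : ℝ) * ((∫ x, g x) * ε ^ (-γ₂)))
      ≤ t * ε ^ (γ₁ - γ₂) * (∫ x, g x) := by
    calc ε ^ 2 * ((N : ℝ) * ((∫ x, g x) * ε ^ (-γ₂)))
        ≤ ε ^ 2 * ((t * ε ^ (γ₁ - 2)) * ((∫ x, g x) * ε ^ (-γ₂))) := by
          refine mul_le_mul_of_nonneg_left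
            (mul_le_mul_of_nonneg_right hN2 (by positivity)) (by positivity)
      _ = t * (∫ x, g x) * (ε ^ ((2:ℕ):ℝ) * (ε ^ (γ₁ - 2) * ε ^ (-γ₂))) := by
          rw [Real.rpow_natCast]; ring
      _ = t * (∫ x, g x) * ε ^ (((2:ℕ):ℝ) + (γ₁ - 2 + -γ₂)) := by
          rw [← Real.rpow_add hε0, ← Real.rpow_add hε0]
      _ = t * ε ^ (γ₁ - γ₂) * (∫ x, g x) := by
          rw [show ((2:ℕ):ℝ) + (γ₁ - 2 + -γ₂) = γ₁ - γ₂ by push_cast; ring]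
          ring
  have h4 : ε ^ 2 * ((N : ℝ) * ((N : ℝ) * ((Cg * ε ^ (γ₁ * lam) * ε ^ (-γ₂)) * ε ^ (-γ₂))))
      ≤ t ^ 2 * Cg * ε ^ (γ₁ * lam + 2 * γ₁ - 2 * γ₂ - 2) := by
    have hCnn : (0:ℝ) ≤ (Cg * ε ^ (γ₁ * lam) * ε ^ (-γ₂)) * ε ^ (-γ₂) := by positivity
    calc ε ^ 2 * ((N : ℝ) * ((N : ℝ) * ((Cg * ε ^ (γ₁ * lam) * ε ^ (-γ₂)) * ε ^ (-γ₂))))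
        ≤ ε ^ 2 * ((t * ε ^ (γ₁ - 2)) * ((t * ε ^ (γ₁ - 2))
            * ((Cg * ε ^ (γ₁ * lam) * ε ^ (-γ₂)) * ε ^ (-γ₂)))) := by
          refine mul_le_mul_of_nonneg_left
            (mul_le_mul hN2 (mul_le_mul_of_nonneg_right hN2 hCnn)
              (mul_nonneg hNnn hCnn) hXnn) (by positivity)
      _ = t ^ 2 * Cg * (ε ^ ((2:ℕ):ℝ) * (ε ^ (γ₁ - 2) * (ε ^ (γ₁ - 2)
            * (ε ^ (γ₁ * lam) * (ε ^ (-γ₂) * ε ^ (-γ₂)))))) := by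
          rw [Real.rpow_natCast]; ring
      _ = t ^ 2 * Cg * ε ^ (((2:ℕ):ℝ) + (γ₁ - 2 + (γ₁ - 2 + (γ₁ * lam + (-γ₂ + -γ₂))))) := by
          rw [← Real.rpow_add hε0, ← Real.rpow_add hε0, ← Real.rpow_add hε0,
            ← Real.rpow_add hε0, ← Real.rpow_add hε0]
      _ = t ^ 2 * Cg * ε ^ (γ₁ * lam + 2 * γ₁ - 2 * γ₂ - 2) := by
          rw [show ((2:ℕ):ℝ) + (γ₁ - 2 + (γ₁ - 2 + (γ₁ * lam + (-γ₂ + -γ₂))))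
            = γ₁ * lam + 2 * γ₁ - 2 * γ₂ - 2 by push_cast; ring]
  calc (∫ ω, (ε * ∑ k ∈ Finset.Icc 1 N,
        ∫ s in (((k : ℝ) - 1) * (ε ^ (-γ₁) + ε ^ (-γ₂)) + ε ^ (-γ₁))..
            ((k : ℝ) * (ε ^ (-γ₁) + ε ^ (-γ₂))), V s (b s) ω) ^ 2 ∂μ)
      = ε ^ 2 * ∑ m ∈ Finset.Icc 1 N, ∑ n ∈ Finset.Icc 1 N,
          ∫ s in J m, ∫ u in J n, Q s u := hPid
    _ ≤ ε ^ 2 * ((N : ℝ) * ((∫ x, g x) * ε ^ (-γ₂)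
          + (N : ℝ) * ((Cg * ε ^ (γ₁ * lam) * ε ^ (-γ₂)) * ε ^ (-γ₂)))) :=
        mul_le_mul_of_nonneg_left htot (by positivity)
    _ = ε ^ 2 * ((N : ℝ) * ((∫ x, g x) * ε ^ (-γ₂)))
        + ε ^ 2 * ((N : ℝ) * ((N : ℝ) * ((Cg * ε ^ (γ₁ * lam) * ε ^ (-γ₂)) * ε ^ (-γ₂)))) := by
        ring
    _ ≤ t * ε ^ (γ₁ - γ₂) * (∫ x, g x)
        + t ^ 2 * Cg * ε ^ (γ₁ * lam + 2 * γ₁ - 2 * γ₂ - 2) := add_le_add h3 h4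
end

section
/- Let R : ℝ × ℝ^d → ℝ be continuous, bounded, with ∫₀^∞ sup_x |R(u,x)| du < ∞. Let b¹, b² : [0,t] → ℝ^d be continuous paths. Define, for ε > 0, F(ε) = ε^{−2} ∫₀^t ∫₀^t R((s−u)/ε², b¹(s) − b²(u)) ds du. Then F(ε) → ∫₀^t 𝓡(b¹(s) − b²(s)) ds as ε → 0⁺, where 𝓡(x) = ∫_ℝ R(u,x) du and R(−u,x) is interpreted via R being extended evenly, i.e., assuming R(u,x) = R(−u,−x). -/
open MeasureTheory Filter Set

theorem stmt12 (d : ℕ)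
    (R : ℝ → EuclideanSpace ℝ (Fin d) → ℝ)
    (hRcont : Continuous (fun p : ℝ × EuclideanSpace ℝ (Fin d) => R p.1 p.2))
    (K : ℝ) (hRbd : ∀ u x, |R u x| ≤ K)
    (g : ℝ → ℝ) (hg : ∀ u x, |R u x| ≤ g u)
    (hgint : IntegrableOn g (Set.Ioi 0))
    (hsymm : ∀ u x, R u x = R (-u) (-x))
    (t : ℝ) (ht : 0 < t)
    (b₁ b₂ : ℝ → EuclideanSpace ℝ (Fin d)) (hb₁ : Continuous b₁) (hb₂ : Continuous b₂) :
    Tendsto (fun ε : ℝ =>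
        ε ^ (-2 : ℝ) * ∫ s in (0:ℝ)..t, ∫ u in (0:ℝ)..t, R ((s - u) / ε ^ 2) (b₁ s - b₂ u))
      (nhdsWithin 0 (Set.Ioi 0))
      (nhds (∫ s in (0:ℝ)..t, ∫ u : ℝ, R u (b₁ s - b₂ s))) := by
  -- dominating function on ℝ
  set G : ℝ → ℝ := (Set.Ioi (0:ℝ)).indicator g + (Set.Iio (0:ℝ)).indicator (fun v => g (-v))
    with hGdef
  have hgnn : ∀ u, 0 ≤ g u := fun u => le_trans (abs_nonneg _) (hg u (b₁ 0))
  have hGnn : ∀ v, 0 ≤ G v := by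
    intro v
    simp only [hGdef, Pi.add_apply]
    exact add_nonneg (Set.indicator_nonneg (fun u _ => hgnn u) v)
      (Set.indicator_nonneg (fun u _ => hgnn (-u)) v)
  have h1int : Integrable ((Set.Ioi (0:ℝ)).indicator g) := by
    rwa [integrable_indicator_iff measurableSet_Ioi]
  have hGint : Integrable G := by
    refine h1int.add ?_
    have h2 := h1int.comp_neg
    have : (fun v : ℝ => (Set.Ioi (0:ℝ)).indicator g (-v))
        = (Set.Iio (0:ℝ)).indicator (fun v => g (-v)) := by
      funext v
      by_cases hv : v < 0
      · rw [Set.indicator_of_mem (Set.mem_Ioi.mpr (by linarith)),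
          Set.indicator_of_mem (Set.mem_Iio.mpr hv)]
      · rw [Set.indicator_of_notMem (by simp [Set.mem_Ioi]; linarith),
          Set.indicator_of_notMem (by simpa using hv)]
    rwa [this] at h2
  have hGbound : ∀ v : ℝ, v ≠ 0 → ∀ x, |R v x| ≤ G v := by
    intro v hv x
    rcases lt_or_gt_of_ne hv with hv' | hv'
    · have : G v = g (-v) := by
        simp only [hGdef, Pi.add_apply]
        rw [Set.indicator_of_notMem (by simp [Set.mem_Ioi]; linarith),
          Set.indicator_of_mem (Set.mem_Iio.mpr hv'), zero_add]
      rw [this, hsymm v x]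
      exact hg (-v) (-x)
    · have : G v = g v := by
        simp only [hGdef, Pi.add_apply]
        rw [Set.indicator_of_mem (Set.mem_Ioi.mpr hv'),
          Set.indicator_of_notMem (by simp [Set.mem_Iio]; linarith), add_zero]
      rw [this]
      exact hg v x
  have hne0 : ∀ᵐ v : ℝ, v ≠ (0:ℝ) := by
    refine ae_iff.mpr ?_
    have : {v : ℝ | ¬ v ≠ 0} = {0} := by ext v; simp
    rw [this]
    exact measure_singleton 0
  -- the rescaled inner integral, as an integral over ℝ
  set φ : ℝ → ℝ → ℝ := fun ε s => ∫ v : ℝ,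
      (Set.Ioc ((s - t)/ε^2) (s/ε^2)).indicator
        (fun v => R v (b₁ s - b₂ (s - ε^2 * v))) v with hφdef
  -- equality for ε > 0
  have key : ∀ ε : ℝ, ε ∈ Set.Ioi (0:ℝ) →
      ε ^ (-2 : ℝ) * ∫ s in (0:ℝ)..t, ∫ u in (0:ℝ)..t, R ((s - u) / ε ^ 2) (b₁ s - b₂ u)
        = ∫ s in (0:ℝ)..t, φ ε s := by
    intro ε hε
    rw [Set.mem_Ioi] at hε
    have hε2 : (ε:ℝ)^2 ≠ 0 := pow_ne_zero 2 (ne_of_gt hε)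
    have hε2pos : (0:ℝ) < ε^2 := pow_pos hε 2
    have hinner : ∀ s : ℝ,
        (∫ u in (0:ℝ)..t, R ((s - u) / ε ^ 2) (b₁ s - b₂ u)) = ε^2 * φ ε s := by
      intro s
      have h1 : (∫ u in (0:ℝ)..t, R ((s - u) / ε ^ 2) (b₁ s - b₂ u))
          = ∫ u in (0:ℝ)..t,
              R ((s - u)/ε^2) (b₁ s - b₂ (s - ε^2 * ((s - u)/ε^2))) := by
        apply intervalIntegral.integral_congr
        intro u _
        have h : s - ε^2 * ((s - u)/ε^2) = u := by field_simp; ring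
        show R ((s - u)/ε^2) (b₁ s - b₂ u)
          = R ((s - u)/ε^2) (b₁ s - b₂ (s - ε^2 * ((s - u)/ε^2)))
        rw [h]
      have h2 : (∫ u in (0:ℝ)..t,
              R ((s - u)/ε^2) (b₁ s - b₂ (s - ε^2 * ((s - u)/ε^2))))
          = ∫ w in (s - t)..(s - 0),
              R (w/ε^2) (b₁ s - b₂ (s - ε^2 * (w/ε^2))) := by
        simpa using intervalIntegral.integral_comp_sub_left
          (a := 0) (b := t) (fun w => R (w/ε^2) (b₁ s - b₂ (s - ε^2 * (w/ε^2)))) s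
      have h3 : (∫ w in (s - t)..(s - 0),
              R (w/ε^2) (b₁ s - b₂ (s - ε^2 * (w/ε^2))))
          = ε^2 * ∫ v in ((s - t)/ε^2)..(s/ε^2), R v (b₁ s - b₂ (s - ε^2 * v)) := by
        have := intervalIntegral.integral_comp_div
          (a := s - t) (b := s - 0) (c := ε^2)
          (fun v => R v (b₁ s - b₂ (s - ε^2 * v))) hε2
        simpa [smul_eq_mul] using this
      have h4 : (∫ v in ((s - t)/ε^2)..(s/ε^2), R v (b₁ s - b₂ (s - ε^2 * v))) = φ ε s := by
        rw [hφdef]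
        rw [intervalIntegral.integral_of_le
          ((div_le_div_iff_of_pos_right hε2pos).mpr (by linarith))]
        rw [← MeasureTheory.integral_indicator measurableSet_Ioc]
      rw [h1, h2, h3, h4]
    rw [intervalIntegral.integral_congr (fun s _ => hinner s),
      intervalIntegral.integral_const_mul, ← mul_assoc]
    have hrp : ε ^ (-2 : ℝ) = (ε^2)⁻¹ := by
      rw [Real.rpow_neg hε.le]
      congr 1
      rw [show (2:ℝ) = ((2:ℕ):ℝ) by norm_num, Real.rpow_natCast]
    rw [hrp, inv_mul_cancel₀ hε2, one_mul]
  -- main convergence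
  have main : Tendsto (fun ε => ∫ s in (0:ℝ)..t, φ ε s) (nhdsWithin 0 (Set.Ioi 0))
      (nhds (∫ s in (0:ℝ)..t, ∫ u : ℝ, R u (b₁ s - b₂ s))) := by
    rw [intervalIntegral.integral_of_le ht.le]
    simp_rw [intervalIntegral.integral_of_le ht.le]
    apply tendsto_integral_filter_of_dominated_convergence (fun _ => ∫ v, G v)
    · -- measurability
      refine Filter.Eventually.of_forall (fun ε => ?_)
      have hS : MeasurableSet {p : ℝ × ℝ | (p.1 - t)/ε^2 < p.2 ∧ p.2 ≤ p.1/ε^2} := by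
        apply MeasurableSet.inter
        · exact measurableSet_lt (((measurable_fst.sub measurable_const)).div_const _)
            measurable_snd
        · exact measurableSet_le measurable_snd (measurable_fst.div_const _)
      have hF : StronglyMeasurable (fun p : ℝ × ℝ =>
          ({p : ℝ × ℝ | (p.1 - t)/ε^2 < p.2 ∧ p.2 ≤ p.1/ε^2}).indicator
            (fun p : ℝ × ℝ => R p.2 (b₁ p.1 - b₂ (p.1 - ε^2 * p.2))) p) := by
        refine Continuous.stronglyMeasurable ?_ |>.indicator hS
        exact hRcont.comp (continuous_snd.prodMk
          ((hb₁.comp continuous_fst).sub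
            (hb₂.comp (continuous_fst.sub (continuous_const.mul continuous_snd)))))
      have : φ ε = fun s => ∫ v, (fun p : ℝ × ℝ =>
          ({p : ℝ × ℝ | (p.1 - t)/ε^2 < p.2 ∧ p.2 ≤ p.1/ε^2}).indicator
            (fun p : ℝ × ℝ => R p.2 (b₁ p.1 - b₂ (p.1 - ε^2 * p.2))) p) (s, v) := by
        funext s
        rw [hφdef]
        congr 1
      rw [this]
      exact hF.integral_prod_right'.aestronglyMeasurable
    · -- uniform bound
      refine Filter.Eventually.of_forall (fun ε => ?_)
      refine ae_restrict_of_ae (Filter.Eventually.of_forall (fun s => ?_))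
      rw [hφdef]
      refine le_trans (norm_integral_le_integral_norm _) ?_
      refine integral_mono_of_nonneg (Filter.Eventually.of_forall fun v => norm_nonneg _)
        hGint ?_
      filter_upwards [hne0] with v hv
      by_cases hmem : v ∈ Set.Ioc ((s - t)/ε^2) (s/ε^2)
      · rw [Set.indicator_of_mem hmem]
        simpa [Real.norm_eq_abs] using hGbound v hv _
      · rw [Set.indicator_of_notMem hmem]
        simpa using hGnn v
    · exact (integrableOn_const_iff).mpr (Or.inr measure_Ioc_lt_top)
    · -- pointwise limit
      filter_upwards [ae_restrict_mem measurableSet_Ioc, ae_restrict_of_ae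
        (show ∀ᵐ s : ℝ, s ≠ t by
          refine ae_iff.mpr ?_
          have : {s : ℝ | ¬ s ≠ t} = {t} := by ext s; simp
          rw [this]; exact measure_singleton t)] with s hs hst
      have hs0 : 0 < s := hs.1
      have hstlt : s < t := lt_of_le_of_ne hs.2 hst
      rw [hφdef]
      apply tendsto_integral_filter_of_dominated_convergence G
      · refine Filter.Eventually.of_forall (fun ε => ?_)
        refine Continuous.stronglyMeasurable ?_ |>.indicator measurableSet_Ioc
          |>.aestronglyMeasurable
        exact hRcont.comp (continuous_id.prodMk
          ((continuous_const).sub (hb₂.comp (continuous_const.sub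
            (continuous_const.mul continuous_id)))))
      · refine Filter.Eventually.of_forall (fun ε => ?_)
        filter_upwards [hne0] with v hv
        by_cases hmem : v ∈ Set.Ioc ((s - t)/ε^2) (s/ε^2)
        · rw [Set.indicator_of_mem hmem]
          simpa [Real.norm_eq_abs] using hGbound v hv _
        · rw [Set.indicator_of_notMem hmem]
          simpa using hGnn v
      · exact hGint
      · refine Filter.Eventually.of_forall (fun v => ?_)
        have hsq : Tendsto (fun ε : ℝ => ε^2) (nhdsWithin 0 (Set.Ioi 0))
            (nhdsWithin 0 (Set.Ioi 0)) := by
          apply tendsto_nhdsWithin_of_tendsto_nhds_of_eventually_within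
          · have := ((continuous_pow 2).tendsto (0:ℝ)).mono_left
              (nhdsWithin_le_nhds (s := Set.Ioi (0:ℝ)))
            simpa using this
          · exact eventually_nhdsWithin_of_forall (fun ε hε => show (0:ℝ) < ε^2 from pow_pos hε 2)
        have hTop : Tendsto (fun ε : ℝ => s/ε^2) (nhdsWithin 0 (Set.Ioi 0)) atTop := by
          simp_rw [div_eq_mul_inv]
          exact Tendsto.pos_mul_atTop hs0 tendsto_const_nhds
            (tendsto_inv_nhdsGT_zero.comp hsq)
        have hBot : Tendsto (fun ε : ℝ => (s - t)/ε^2) (nhdsWithin 0 (Set.Ioi 0)) atBot := by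
          simp_rw [div_eq_mul_inv]
          exact Tendsto.neg_mul_atTop (by linarith) tendsto_const_nhds
            (tendsto_inv_nhdsGT_zero.comp hsq)
        have hev : ∀ᶠ ε in nhdsWithin 0 (Set.Ioi 0),
            R v (b₁ s - b₂ (s - ε^2 * v))
              = (Set.Ioc ((s - t)/ε^2) (s/ε^2)).indicator
                  (fun v => R v (b₁ s - b₂ (s - ε^2 * v))) v := by
          filter_upwards [hTop.eventually_ge_atTop v, hBot.eventually_lt_atBot v]
            with ε h1 h2
          exact (Set.indicator_of_mem (Set.mem_Ioc.mpr ⟨h2, h1⟩) (fun v => R v (b₁ s - b₂ (s - ε ^ 2 * v)))).symm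
        have hc : Tendsto (fun ε : ℝ => R v (b₁ s - b₂ (s - ε^2 * v)))
            (nhdsWithin 0 (Set.Ioi 0)) (nhds (R v (b₁ s - b₂ s))) := by
          have hcont : Continuous (fun ε : ℝ => R v (b₁ s - b₂ (s - ε^2 * v))) :=
            hRcont.comp (continuous_const.prodMk
              (continuous_const.sub (hb₂.comp
                (continuous_const.sub ((continuous_pow 2).mul continuous_const)))))
          have := (hcont.tendsto 0).mono_left
            (nhdsWithin_le_nhds (s := Set.Ioi (0:ℝ)))
          simpa using this
        exact hc.congr' hev
  refine main.congr' ?_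
  filter_upwards [self_mem_nhdsWithin] with ε hε
  exact (key ε hε).symm
end
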